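/- Let T_1, T_2, …, T_{2^n} be a total ordering of all subsets of N = {1,…,n} such that T_i ⊆ T_j implies i ≤ j. Then every element q of the pure braid group P_n can be written as a product q = q_1 q_2 ⋯ q_{2^n}, where for each i the element q_i is a (possibly empty) product of monic commutators each of whose support equals T_i. -/

import Mathlib

/-!
Common setup: the pure braid group `P_n` as a presented group, the subgroups
`P_S` and `Q_S`, the characterization of the homomorphisms `φ_S`, the support
`σ(x)`, and monic commutators.
-/

/-- The free-group generator corresponding to the pure braid generator
`p_{a,b}` for `a < b` (indices in `Fin n`, so strand `i+1` of `{1,…,n}`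
corresponds to `i : Fin n`). -/
def pf {n : ℕ} (a b : Fin n) (h : a < b) :
    FreeGroup {q : Fin n × Fin n // q.1 < q.2} :=
  FreeGroup.of ⟨(a, b), h⟩

/-- The defining relations (A), (B), (C) of the pure braid group `P_n`,
each written in the form `lhs⁻¹ * rhs` for an equation `lhs = rhs`. -/
def braidRels (n : ℕ) : Set (FreeGroup {q : Fin n × Fin n // q.1 < q.2}) :=
  -- (A) first equality: p_{a,b} p_{a,c} p_{b,c} = p_{a,c} p_{b,c} p_{a,b}
  {r | ∃ (a b c : Fin n) (hab : a < b) (hbc : b < c),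
      r = (pf a b hab * pf a c (hab.trans hbc) * pf b c hbc)⁻¹ *
          (pf a c (hab.trans hbc) * pf b c hbc * pf a b hab)} ∪
  -- (A) second equality: p_{a,b} p_{a,c} p_{b,c} = p_{b,c} p_{a,b} p_{a,c}
  {r | ∃ (a b c : Fin n) (hab : a < b) (hbc : b < c),
      r = (pf a b hab * pf a c (hab.trans hbc) * pf b c hbc)⁻¹ *
          (pf b c hbc * pf a b hab * pf a c (hab.trans hbc))} ∪
  -- (B) first: p_{a,b} p_{c,d} = p_{c,d} p_{a,b}
  {r | ∃ (a b c d : Fin n) (hab : a < b) (hbc : b < c) (hcd : c < d),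
      r = (pf a b hab * pf c d hcd)⁻¹ * (pf c d hcd * pf a b hab)} ∪
  -- (B) second: p_{a,d} p_{b,c} = p_{b,c} p_{a,d}
  {r | ∃ (a b c d : Fin n) (hab : a < b) (hbc : b < c) (hcd : c < d),
      r = (pf a d (hab.trans (hbc.trans hcd)) * pf b c hbc)⁻¹ *
          (pf b c hbc * pf a d (hab.trans (hbc.trans hcd)))} ∪
  -- (C): p_{a,c} (p_{b,c}⁻¹ p_{b,d} p_{b,c}) = (p_{b,c}⁻¹ p_{b,d} p_{b,c}) p_{a,c}
  {r | ∃ (a b c d : Fin n) (hab : a < b) (hbc : b < c) (hcd : c < d),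
      r = (pf a c (hab.trans hbc) * ((pf b c hbc)⁻¹ * pf b d (hbc.trans hcd) * pf b c hbc))⁻¹ *
          ((pf b c hbc)⁻¹ * pf b d (hbc.trans hcd) * pf b c hbc * pf a c (hab.trans hbc))}

/-- The pure braid group `P_n`, given by the presentation above. -/
abbrev PB (n : ℕ) := PresentedGroup (braidRels n)

/-- The generator `p_{a,b}` of the pure braid group, for `a < b`. -/
def p {n : ℕ} (a b : Fin n) (h : a < b) : PB n := PresentedGroup.of ⟨(a, b), h⟩

/-- `P_S`: the subgroup of `P_n` generated by all `p_{a,b}` with `a ∈ S` and `b ∈ S`. -/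
def PS {n : ℕ} (S : Set (Fin n)) : Subgroup (PB n) :=
  Subgroup.closure {x | ∃ (a b : Fin n) (h : a < b), a ∈ S ∧ b ∈ S ∧ x = p a b h}

/-- `Q_S`: the subgroup of `P_n` generated by all `p_{a,b}` with `a ∈ S` or `b ∈ S`. -/
def QS {n : ℕ} (S : Set (Fin n)) : Subgroup (PB n) :=
  Subgroup.closure {x | ∃ (a b : Fin n) (h : a < b), (a ∈ S ∨ b ∈ S) ∧ x = p a b h}

/-- `IsPhi S φ` says that `φ : P_n → P_n` is the homomorphism `φ_S`, i.e. it sends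
`p_{a,b}` to itself if `a ∉ S` and `b ∉ S`, and to `1` otherwise. -/
def IsPhi {n : ℕ} (S : Set (Fin n)) (φ : PB n →* PB n) : Prop :=
  ∀ (a b : Fin n) (h : a < b),
    (a ∉ S ∧ b ∉ S → φ (p a b h) = p a b h) ∧ ((a ∈ S ∨ b ∈ S) → φ (p a b h) = 1)

/-- The support `σ(x)` of `x ∈ P_n`: the intersection of all `S` with `x ∈ P_S`. -/
def support {n : ℕ} (x : PB n) : Set (Fin n) := ⋂₀ {S | x ∈ PS S}

/-- Monic commutators: the smallest set of elements of `P_n` containing all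
`p_{a,b}` and `p_{a,b}⁻¹` and closed under taking nontrivial commutators
`[x,y] = x⁻¹ y⁻¹ x y`. -/
inductive IsMonic {n : ℕ} : PB n → Prop
  | of (a b : Fin n) (h : a < b) : IsMonic (p a b h)
  | inv (a b : Fin n) (h : a < b) : IsMonic (p a b h)⁻¹
  | comm (x y : PB n) : IsMonic x → IsMonic y → x⁻¹ * y⁻¹ * x * y ≠ 1 →
      IsMonic (x⁻¹ * y⁻¹ * x * y)

namespace BraidAux

variable {n : ℕ}

lemma pb_rel {r : FreeGroup {q : Fin n × Fin n // q.1 < q.2}} (hr : r ∈ braidRels n) :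
    PresentedGroup.mk (braidRels n) r = 1 := by
  have : r ∈ Subgroup.normalClosure (braidRels n) := Subgroup.subset_normalClosure hr
  exact (QuotientGroup.eq_one_iff r).mpr this

lemma mk_pf (a b : Fin n) (h : a < b) :
    PresentedGroup.mk (braidRels n) (pf a b h) = p a b h := rfl

lemma relA1 (a b c : Fin n) (hab : a < b) (hbc : b < c) :
    p a b hab * p a c (hab.trans hbc) * p b c hbc =
      p a c (hab.trans hbc) * p b c hbc * p a b hab := by
  have h := pb_rel (n := n) (Or.inl (Or.inl (Or.inl (Or.inl ⟨a, b, c, hab, hbc, rfl⟩))))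
  rw [map_mul, map_inv, inv_mul_eq_one] at h
  simpa only [map_mul, mk_pf] using h

lemma relA2 (a b c : Fin n) (hab : a < b) (hbc : b < c) :
    p a b hab * p a c (hab.trans hbc) * p b c hbc =
      p b c hbc * p a b hab * p a c (hab.trans hbc) := by
  have h := pb_rel (n := n) (Or.inl (Or.inl (Or.inl (Or.inr ⟨a, b, c, hab, hbc, rfl⟩))))
  rw [map_mul, map_inv, inv_mul_eq_one] at h
  simpa only [map_mul, mk_pf] using h

lemma relB1 (a b c d : Fin n) (hab : a < b) (hbc : b < c) (hcd : c < d) :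
    p a b hab * p c d hcd = p c d hcd * p a b hab := by
  have h := pb_rel (n := n) (Or.inl (Or.inl (Or.inr ⟨a, b, c, d, hab, hbc, hcd, rfl⟩)))
  rw [map_mul, map_inv, inv_mul_eq_one] at h
  simpa only [map_mul, mk_pf] using h

lemma relB2 (a b c d : Fin n) (hab : a < b) (hbc : b < c) (hcd : c < d) :
    p a d (hab.trans (hbc.trans hcd)) * p b c hbc =
      p b c hbc * p a d (hab.trans (hbc.trans hcd)) := by
  have h := pb_rel (n := n) (Or.inl (Or.inr ⟨a, b, c, d, hab, hbc, hcd, rfl⟩))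
  rw [map_mul, map_inv, inv_mul_eq_one] at h
  simpa only [map_mul, mk_pf] using h

lemma relC (a b c d : Fin n) (hab : a < b) (hbc : b < c) (hcd : c < d) :
    p a c (hab.trans hbc) * ((p b c hbc)⁻¹ * p b d (hbc.trans hcd) * p b c hbc) =
      (p b c hbc)⁻¹ * p b d (hbc.trans hcd) * p b c hbc * p a c (hab.trans hbc) := by
  have h := pb_rel (n := n) (Or.inr ⟨a, b, c, d, hab, hbc, hcd, rfl⟩)
  rw [map_mul, map_inv, inv_mul_eq_one] at h
  simpa only [map_mul, map_inv, mk_pf] using h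

end BraidAux

namespace BraidAux
open scoped Classical

variable {n : ℕ}

/-- exponent-sum character at a fixed generator. -/
def chi (g₀ : {q : Fin n × Fin n // q.1 < q.2}) : PB n →* Multiplicative ℤ :=
  PresentedGroup.toGroup (f := fun g => if g = g₀ then Multiplicative.ofAdd (1 : ℤ) else 1)
    (by
      rintro r (((((⟨a,b,c,hab,hbc,rfl⟩|⟨a,b,c,hab,hbc,rfl⟩)|⟨a,b,c,d,hab,hbc,hcd,rfl⟩)|
        ⟨a,b,c,d,hab,hbc,hcd,rfl⟩)|⟨a,b,c,d,hab,hbc,hcd,rfl⟩)) <;>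
      · simp only [pf, map_mul, map_inv, FreeGroup.lift_apply_of, inv_mul_eq_one]
        simp [mul_comm, mul_left_comm, mul_assoc])

lemma chi_self (a b : Fin n) (h : a < b) :
    chi ⟨(a, b), h⟩ (p a b h) = Multiplicative.ofAdd (1 : ℤ) := by
  simp [chi, p, PresentedGroup.toGroup.of]

lemma p_ne_one (a b : Fin n) (h : a < b) : p a b h ≠ 1 := by
  intro hx
  have := chi_self a b h
  rw [hx, map_one] at this
  have h2 : (Multiplicative.ofAdd (1 : ℤ)) = Multiplicative.ofAdd (0 : ℤ) := by
    simpa using this.symm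
  exact one_ne_zero (Multiplicative.ofAdd.injective h2)

end BraidAux

namespace BraidAux
open scoped Classical

variable {n : ℕ}

/-- The retraction onto `P_U`, killing all generators not entirely inside `U`. -/
noncomputable def phi (U : Set (Fin n)) : PB n →* PB n :=
  PresentedGroup.toGroup
    (f := fun g => if g.1.1 ∈ U ∧ g.1.2 ∈ U then p g.1.1 g.1.2 g.2 else 1)
    (by
      rintro r (((((⟨a,b,c,hab,hbc,rfl⟩|⟨a,b,c,hab,hbc,rfl⟩)|⟨a,b,c,d,hab,hbc,hcd,rfl⟩)|
        ⟨a,b,c,d,hab,hbc,hcd,rfl⟩)|⟨a,b,c,d,hab,hbc,hcd,rfl⟩))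
      · simp only [pf, map_mul, map_inv, FreeGroup.lift_apply_of, inv_mul_eq_one]
        by_cases ha : a ∈ U <;> by_cases hb : b ∈ U <;> by_cases hc : c ∈ U <;>
          simp [ha, hb, hc, relA1 a b c hab hbc]
      · simp only [pf, map_mul, map_inv, FreeGroup.lift_apply_of, inv_mul_eq_one]
        by_cases ha : a ∈ U <;> by_cases hb : b ∈ U <;> by_cases hc : c ∈ U <;>
          simp [ha, hb, hc, relA2 a b c hab hbc]
      · simp only [pf, map_mul, map_inv, FreeGroup.lift_apply_of, inv_mul_eq_one]
        by_cases ha : a ∈ U <;> by_cases hb : b ∈ U <;> by_cases hc : c ∈ U <;>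
          by_cases hd : d ∈ U <;> simp [ha, hb, hc, hd, relB1 a b c d hab hbc hcd]
      · simp only [pf, map_mul, map_inv, FreeGroup.lift_apply_of, inv_mul_eq_one]
        by_cases ha : a ∈ U <;> by_cases hb : b ∈ U <;> by_cases hc : c ∈ U <;>
          by_cases hd : d ∈ U <;> simp [ha, hb, hc, hd, relB2 a b c d hab hbc hcd]
      · simp only [pf, map_mul, map_inv, FreeGroup.lift_apply_of, inv_mul_eq_one]
        by_cases ha : a ∈ U <;> by_cases hb : b ∈ U <;> by_cases hc : c ∈ U <;>
          by_cases hd : d ∈ U <;> simp [ha, hb, hc, hd, relC a b c d hab hbc hcd])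

lemma phi_of (U : Set (Fin n)) (a b : Fin n) (h : a < b) :
    phi U (p a b h) = if a ∈ U ∧ b ∈ U then p a b h else 1 := by
  simp [phi, p, PresentedGroup.toGroup.of]

lemma phi_of_mem (U : Set (Fin n)) {a b : Fin n} (h : a < b) (ha : a ∈ U) (hb : b ∈ U) :
    phi U (p a b h) = p a b h := by simp [phi_of, ha, hb]

lemma phi_of_not_mem (U : Set (Fin n)) {a b : Fin n} (h : a < b) (hab : ¬(a ∈ U ∧ b ∈ U)) :
    phi U (p a b h) = 1 := by simp [phi_of, hab]

end BraidAux

namespace BraidAux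

variable {n : ℕ}

lemma PS_mono {S S' : Set (Fin n)} (h : S ⊆ S') : PS S ≤ PS S' := by
  apply Subgroup.closure_mono
  rintro x ⟨a, b, hab, ha, hb, rfl⟩
  exact ⟨a, b, hab, h ha, h hb, rfl⟩

lemma mem_PS {S : Set (Fin n)} {a b : Fin n} (h : a < b) (ha : a ∈ S) (hb : b ∈ S) :
    p a b h ∈ PS S :=
  Subgroup.subset_closure ⟨a, b, h, ha, hb, rfl⟩

lemma phi_fix {U S : Set (Fin n)} (hSU : S ⊆ U) {x : PB n} (hx : x ∈ PS S) :
    phi U x = x := by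
  induction hx using Subgroup.closure_induction with
  | mem y hy =>
      obtain ⟨a, b, hab, ha, hb, rfl⟩ := hy
      exact phi_of_mem U hab (hSU ha) (hSU hb)
  | one => exact map_one _
  | mul y z _ _ hy hz => rw [map_mul, hy, hz]
  | inv y _ hy => rw [map_inv, hy]

/-- certificate that `support x = S` -/
def Good (x : PB n) (S : Set (Fin n)) : Prop :=
  x ∈ PS S ∧ (∀ a ∈ S, phi ({a}ᶜ) x = 1) ∧ x ≠ 1

lemma good_support {x : PB n} {S : Set (Fin n)} (hg : Good x S) : support x = S := by
  obtain ⟨hx, hkill, hne⟩ := hg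
  apply subset_antisymm
  · exact Set.sInter_subset_of_mem hx
  · intro a ha
    apply Set.mem_sInter.2
    intro V hV
    by_contra haV
    have hVU : V ⊆ ({a}ᶜ : Set (Fin n)) := fun b hb => by
      simp only [Set.mem_compl_iff, Set.mem_singleton_iff]
      rintro rfl; exact haV hb
    have := phi_fix hVU hV
    rw [hkill a ha] at this
    exact hne this.symm

lemma good_comm {x y : PB n} {Sx Sy : Set (Fin n)} (hx : Good x Sx) (hy : Good y Sy)
    (hne : x⁻¹ * y⁻¹ * x * y ≠ 1) : Good (x⁻¹ * y⁻¹ * x * y) (Sx ∪ Sy) := by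
  obtain ⟨hx1, hx2, _⟩ := hx
  obtain ⟨hy1, hy2, _⟩ := hy
  refine ⟨?_, ?_, hne⟩
  · have hx' : x ∈ PS (Sx ∪ Sy) := PS_mono Set.subset_union_left hx1
    have hy' : y ∈ PS (Sx ∪ Sy) := PS_mono Set.subset_union_right hy1
    exact mul_mem (mul_mem (mul_mem (inv_mem hx') (inv_mem hy')) hx') hy'
  · intro a ha
    rcases ha with ha | ha
    · simp [map_mul, map_inv, hx2 a ha]
    · simp [map_mul, map_inv, hy2 a ha]

lemma monic_good {x : PB n} (hx : IsMonic x) : Good x (support x) := by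
  induction hx with
  | of a b h =>
      have hg : Good (p a b h) {a, b} := by
        refine ⟨mem_PS h (by simp) (by simp), ?_, p_ne_one a b h⟩
        intro c hc
        apply phi_of_not_mem
        rintro ⟨hA, hB⟩
        rcases hc with rfl | hc
        · simp at hA
        · simp only [Set.mem_singleton_iff] at hc; subst hc; simp at hB
      rw [good_support hg]; exact hg
  | inv a b h =>
      have hg : Good (p a b h)⁻¹ {a, b} := by
        refine ⟨inv_mem (mem_PS h (by simp) (by simp)), ?_, by
          simp only [ne_eq, inv_eq_one]; exact p_ne_one a b h⟩
        intro c hc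
        rw [map_inv, inv_eq_one]
        apply phi_of_not_mem
        rintro ⟨hA, hB⟩
        rcases hc with rfl | hc
        · simp at hA
        · simp only [Set.mem_singleton_iff] at hc; subst hc; simp at hB
      rw [good_support hg]; exact hg
  | comm x y _ _ hne ihx ihy =>
      have hg := good_comm ihx ihy hne
      rw [good_support hg]; exact hg

lemma monic_ne_one {x : PB n} (hx : IsMonic x) : x ≠ 1 := (monic_good hx).2.2

lemma support_comm {x y : PB n} (hx : IsMonic x) (hy : IsMonic y)
    (hne : x⁻¹ * y⁻¹ * x * y ≠ 1) :
    support (x⁻¹ * y⁻¹ * x * y) = support x ∪ support y :=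
  good_support (good_comm (monic_good hx) (monic_good hy) hne)

end BraidAux

namespace BraidAux

variable {n : ℕ}

section Collection

variable (T : Fin (2 ^ n) → Set (Fin n)) (hbij : Function.Bijective T)

/-- the index of the support of `x` in the enumeration `T`. -/
noncomputable def idx (x : PB n) : ℕ :=
  ((Equiv.ofBijective T hbij).symm (support x) : Fin (2 ^ n)).val

lemma T_idx (x : PB n) : T ⟨idx T hbij x, Fin.is_lt _⟩ = support x :=
  (Equiv.ofBijective T hbij).apply_symm_apply (support x)

lemma idx_mono (hord : ∀ i j, T i ⊆ T j → i ≤ j) {x y : PB n} (h : support x ⊆ support y) :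
    idx T hbij x ≤ idx T hbij y := by
  have e1 : T ((Equiv.ofBijective T hbij).symm (support x)) = support x :=
    (Equiv.ofBijective T hbij).apply_symm_apply _
  have e2 : T ((Equiv.ofBijective T hbij).symm (support y)) = support y :=
    (Equiv.ofBijective T hbij).apply_symm_apply _
  exact hord _ _ (by rw [e1, e2]; exact h)

/-- move a single monic element `y` from the right of a list of high-class
monic elements to its left. -/
lemma move_one (hord : ∀ i j, T i ⊆ T j → i ≤ j) (k : ℕ) (y : PB n) (hy : IsMonic y) :
    ∀ g : List (PB n), (∀ x ∈ g, IsMonic x ∧ k < idx T hbij x) →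
    ∃ g₂ : List (PB n), (∀ x ∈ g₂, IsMonic x ∧ k < idx T hbij x) ∧
      g.prod * y = y * g₂.prod := by
  intro g
  induction g with
  | nil => exact fun _ => ⟨[], by simp, by simp⟩
  | cons x g' ih =>
      intro hg
      obtain ⟨hx, hxk⟩ := hg x (List.mem_cons_self)
      obtain ⟨g₂, hg₂, hprod⟩ := ih (fun z hz => hg z (List.mem_cons_of_mem x hz))
      set c := x⁻¹ * y⁻¹ * x * y with hc
      have key : x * y = y * (x * c) := by rw [hc]; group
      by_cases hc1 : c = 1
      · refine ⟨x :: g₂, ?_, ?_⟩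
        · intro z hz
          rcases List.mem_cons.1 hz with rfl | hz
          · exact ⟨hx, hxk⟩
          · exact hg₂ _ hz
        · have hxy : x * y = y * x := by rw [key, hc1]; group
          calc (x :: g').prod * y = x * (g'.prod * y) := by simp [mul_assoc]
            _ = x * (y * g₂.prod) := by rw [hprod]
            _ = (x * y) * g₂.prod := by group
            _ = y * (x :: g₂).prod := by rw [hxy]; simp [mul_assoc]
      · have hcm : IsMonic c := IsMonic.comm x y hx hy hc1
        have hck : k < idx T hbij c := by
          have hsub : support x ⊆ support c := by
            rw [hc, support_comm hx hy hc1]; exact Set.subset_union_left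
          exact lt_of_lt_of_le hxk (idx_mono T hbij hord hsub)
        refine ⟨x :: c :: g₂, ?_, ?_⟩
        · intro z hz
          rcases List.mem_cons.1 hz with rfl | hz
          · exact ⟨hx, hxk⟩
          rcases List.mem_cons.1 hz with rfl | hz
          · exact ⟨hcm, hck⟩
          · exact hg₂ _ hz
        · calc (x :: g').prod * y = x * (g'.prod * y) := by simp [mul_assoc]
            _ = x * (y * g₂.prod) := by rw [hprod]
            _ = (x * y) * g₂.prod := by group
            _ = y * (x :: c :: g₂).prod := by rw [key]; simp [mul_assoc]

/-- move a list `g` of high-class monic elements to the right past a list `h`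
of monic elements. -/
lemma move_list (hord : ∀ i j, T i ⊆ T j → i ≤ j) (k : ℕ) :
    ∀ h g : List (PB n), (∀ x ∈ h, IsMonic x) →
      (∀ x ∈ g, IsMonic x ∧ k < idx T hbij x) →
    ∃ t : List (PB n), (∀ x ∈ t, IsMonic x ∧ k < idx T hbij x) ∧
      g.prod * h.prod = h.prod * t.prod := by
  intro h
  induction h with
  | nil => exact fun g _ hg => ⟨g, hg, by simp⟩
  | cons y h' ih =>
      intro g hh hg
      obtain ⟨g₂, hg₂, h1⟩ := move_one T hbij hord k y (hh y (List.mem_cons_self)) g hg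
      obtain ⟨t, ht, h2⟩ := ih g₂ (fun z hz => hh z (List.mem_cons_of_mem y hz)) hg₂
      refine ⟨t, ht, ?_⟩
      calc g.prod * (y :: h').prod = (g.prod * y) * h'.prod := by simp [mul_assoc]
        _ = (y * g₂.prod) * h'.prod := by rw [h1]
        _ = y * (g₂.prod * h'.prod) := by group
        _ = y * (h'.prod * t.prod) := by rw [h2]
        _ = (y :: h').prod * t.prod := by simp [mul_assoc]

/-- split off the class-`k` part of a list of monic elements of class `≥ k`. -/
lemma split (hord : ∀ i j, T i ⊆ T j → i ≤ j) (k : ℕ) :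
    ∀ l : List (PB n), (∀ x ∈ l, IsMonic x ∧ k ≤ idx T hbij x) →
    ∃ lo t : List (PB n),
      (∀ x ∈ lo, IsMonic x ∧ idx T hbij x = k) ∧
      (∀ x ∈ t, IsMonic x ∧ k + 1 ≤ idx T hbij x) ∧
      l.prod = lo.prod * t.prod := by
  intro l
  induction l with
  | nil => exact fun _ => ⟨[], [], by simp, by simp, by simp⟩
  | cons x rest ih =>
      intro hl
      obtain ⟨hx, hxk⟩ := hl x (List.mem_cons_self)
      obtain ⟨lo, t, hlo, ht, hprod⟩ := ih (fun z hz => hl z (List.mem_cons_of_mem x hz))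
      by_cases hk : idx T hbij x = k
      · refine ⟨x :: lo, t, ?_, ht, ?_⟩
        · intro z hz
          rcases List.mem_cons.1 hz with rfl | hz
          · exact ⟨hx, hk⟩
          · exact hlo _ hz
        · simp [hprod, mul_assoc]
      · have hxk' : k < idx T hbij x := lt_of_le_of_ne hxk (Ne.symm hk)
        obtain ⟨t₂, ht₂, h1⟩ := move_list T hbij hord k lo [x]
          (fun z hz => (hlo z hz).1) (by simpa using ⟨hx, hxk'⟩)
        refine ⟨lo, t₂ ++ t, ?_, ?_, ?_⟩
        · exact hlo
        · intro z hz
          rcases List.mem_append.1 hz with hz | hz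
          · exact (ht₂ z hz).imp id Nat.succ_le_of_lt
          · exact ht z hz
        · have : x * lo.prod = lo.prod * t₂.prod := by simpa using h1
          calc (x :: rest).prod = x * (lo.prod * t.prod) := by simp [hprod]
            _ = (x * lo.prod) * t.prod := by group
            _ = (lo.prod * t₂.prod) * t.prod := by rw [this]
            _ = lo.prod * (t₂ ++ t).prod := by simp [mul_assoc]

end Collection

end BraidAux

namespace BraidAux

lemma prod_ofFn_update {G : Type*} [Group G] :
    ∀ (m : ℕ) (k : ℕ) (hk : k < m) (f : Fin m → G),
      (∀ i : Fin m, i.val ≤ k → f i = 1) → ∀ c : G,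
      (List.ofFn (Function.update f ⟨k, hk⟩ c)).prod = c * (List.ofFn f).prod := by
  intro m
  induction m with
  | zero => intro k hk; omega
  | succ m ih =>
      intro k hk f hf c
      cases k with
      | zero =>
          rw [List.ofFn_succ, List.ofFn_succ]
          have h0 : Function.update f ⟨0, hk⟩ c 0 = c := by
            simp [Function.update, Fin.ext_iff]
          have htail : ∀ i : Fin m, Function.update f ⟨0, hk⟩ c i.succ = f i.succ := by
            intro i
            apply Function.update_of_ne
            simp [Fin.ext_iff]
          have hf0 : f 0 = 1 := hf 0 (by simp)
          simp only [h0, htail, hf0, List.prod_cons, one_mul]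
      | succ k =>
          rw [List.ofFn_succ, List.ofFn_succ]
          have hk' : k < m := by omega
          have h0 : Function.update f ⟨k + 1, hk⟩ c 0 = f 0 := by
            apply Function.update_of_ne
            simp [Fin.ext_iff]
          have htail : (fun i : Fin m => Function.update f ⟨k + 1, hk⟩ c i.succ) =
              Function.update (fun i : Fin m => f i.succ) ⟨k, hk'⟩ c := by
            funext i
            by_cases hi : i = ⟨k, hk'⟩
            · subst hi
              rw [Function.update_self]
              have : (⟨k, hk'⟩ : Fin m).succ = ⟨k + 1, hk⟩ := by
                simp [Fin.ext_iff]
              rw [this, Function.update_self]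
            · rw [Function.update_of_ne hi, Function.update_of_ne]
              simp only [ne_eq, Fin.ext_iff, Fin.val_succ]
              simp only [ne_eq, Fin.ext_iff] at hi
              omega
          have hf0 : f 0 = 1 := hf 0 (by simp)
          rw [List.prod_cons, List.prod_cons, h0, hf0, one_mul, one_mul, htail,
            ih k hk' (fun i => f i.succ) (fun i hi => hf i.succ (by simp; omega)) c]

variable {n : ℕ}

lemma main_collect (T : Fin (2 ^ n) → Set (Fin n)) (hbij : Function.Bijective T)
    (hord : ∀ i j, T i ⊆ T j → i ≤ j) :
    ∀ (d k : ℕ), k + d = 2 ^ n →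
    ∀ l : List (PB n), (∀ x ∈ l, IsMonic x ∧ k ≤ idx T hbij x) →
    ∃ qs : Fin (2 ^ n) → PB n,
      l.prod = (List.ofFn qs).prod ∧
      (∀ i : Fin (2 ^ n), i.val < k → qs i = 1) ∧
      (∀ i, ∃ li : List (PB n),
        (∀ x ∈ li, IsMonic x ∧ support x = T i) ∧ qs i = li.prod) := by
  intro d
  induction d with
  | zero =>
      intro k hk l hl
      have hnil : l = [] := by
        cases l with
        | nil => rfl
        | cons a l' =>
            exfalso
            have := (hl a (List.mem_cons_self)).2
            have hlt : idx T hbij a < 2 ^ n := Fin.is_lt _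
            omega
      subst hnil
      refine ⟨fun _ => 1, by simp, fun _ _ => rfl, fun i => ⟨[], by simp, rfl⟩⟩
  | succ d ih =>
      intro k hk l hl
      have hkm : k < 2 ^ n := by omega
      obtain ⟨lo, t, hlo, ht, hsplit⟩ := split T hbij hord k l hl
      obtain ⟨qs, hqs, hqs1, hqsli⟩ := ih (k + 1) (by omega) t ht
      set j : Fin (2 ^ n) := ⟨k, hkm⟩ with hj
      refine ⟨Function.update qs j lo.prod, ?_, ?_, ?_⟩
      · rw [hsplit, hqs]
        exact (prod_ofFn_update (2 ^ n) k hkm qs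
          (fun i hi => hqs1 i (by omega)) lo.prod).symm
      · intro i hi
        rw [Function.update_of_ne (by simp [hj, Fin.ext_iff]; omega)]
        exact hqs1 i (by omega)
      · intro i
        by_cases hij : i = j
        · subst hij
          refine ⟨lo, ?_, by rw [Function.update_self]⟩
          intro x hx
          obtain ⟨hxm, hxi⟩ := hlo x hx
          refine ⟨hxm, ?_⟩
          have := T_idx T hbij x
          rw [← this]
          congr 1
          simp [Fin.ext_iff, hxi, hj]
        · obtain ⟨li, h1, h2⟩ := hqsli i
          exact ⟨li, h1, by rw [Function.update_of_ne hij]; exact h2⟩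

end BraidAux

namespace BraidAux

variable {n : ℕ}

lemma exists_gen_list (q : PB n) :
    ∃ l : List (PB n), (∀ x ∈ l, IsMonic x) ∧ q = l.prod := by
  have hq : q ∈ Subgroup.closure {x : PB n | ∃ (a b : Fin n) (h : a < b), x = p a b h} := by
    have : {x : PB n | ∃ (a b : Fin n) (h : a < b), x = p a b h} =
        Set.range (PresentedGroup.of : _ → PB n) := by
      ext x
      constructor
      · rintro ⟨a, b, h, rfl⟩; exact ⟨⟨(a, b), h⟩, rfl⟩
      · rintro ⟨⟨⟨a, b⟩, h⟩, rfl⟩; exact ⟨a, b, h, rfl⟩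
    rw [this, PresentedGroup.closure_range_of]
    trivial
  have key : ∀ x ∈ Subgroup.closure {x : PB n | ∃ (a b : Fin n) (h : a < b), x = p a b h},
      ∃ l : List (PB n), (∀ y ∈ l, IsMonic y) ∧ x = l.prod := by
    intro x hx
    induction hx using Subgroup.closure_induction with
    | mem y hy =>
        obtain ⟨a, b, h, rfl⟩ := hy
        refine ⟨[p a b h], ?_, by simp⟩
        intro z hz
        rw [List.mem_singleton] at hz
        subst hz
        exact IsMonic.of a b h
    | one => exact ⟨[], by simp, by simp⟩
    | mul y z _ _ hy hz =>
        obtain ⟨l₁, hl₁, rfl⟩ := hy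
        obtain ⟨l₂, hl₂, rfl⟩ := hz
        exact ⟨l₁ ++ l₂, by
          intro w hw
          rcases List.mem_append.1 hw with hw | hw
          exacts [hl₁ w hw, hl₂ w hw], by simp⟩
    | inv y _ hy =>
        obtain ⟨l, hl, rfl⟩ := hy
        refine ⟨(l.map fun z => z⁻¹).reverse, ?_, (List.prod_inv_reverse l).symm ▸ rfl⟩
        intro w hw
        rw [List.mem_reverse, List.mem_map] at hw
        obtain ⟨z, hz, rfl⟩ := hw
        have hzm := hl z hz
        -- inverse of a monic element is monic
        cases hzm with
        | of a b h => exact IsMonic.inv a b h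
        | inv a b h => rw [inv_inv]; exact IsMonic.of a b h
        | comm u v hu hv hne =>
            have : (u⁻¹ * v⁻¹ * u * v)⁻¹ = v⁻¹ * u⁻¹ * v * u := by group
            rw [this]
            refine IsMonic.comm v u hv hu ?_
            intro hcon
            apply hne
            have : u⁻¹ * v⁻¹ * u * v = (v⁻¹ * u⁻¹ * v * u)⁻¹ := by group
            rw [this, hcon]
            simp
  exact key q hq

end BraidAux


/-- given a total ordering `T₁, …, T_{2^n}` of all subsets of `N`
such that `T i ⊆ T j` implies `i ≤ j`, every `q ∈ P_n` can be written as a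
product `q = q₁ q₂ ⋯ q_{2^n}` where each `qᵢ` is a (possibly empty) product of
monic commutators each of whose support equals `T i`. -/
theorem collection (n : ℕ) (hn : 0 < n) (T : Fin (2 ^ n) → Set (Fin n))
    (hbij : Function.Bijective T)
    (hord : ∀ i j, T i ⊆ T j → i ≤ j)
    (q : PB n) :
    ∃ qs : Fin (2 ^ n) → PB n,
      q = (List.ofFn qs).prod ∧
      ∀ i, ∃ l : List (PB n),
        (∀ x ∈ l, IsMonic x ∧ support x = T i) ∧ qs i = l.prod := by
  obtain ⟨l, hl, rfl⟩ := BraidAux.exists_gen_list q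
  obtain ⟨qs, h1, _, h3⟩ := BraidAux.main_collect T hbij hord (2 ^ n) 0 (by omega) l
    (fun x hx => ⟨hl x hx, Nat.zero_le _⟩)
  exact ⟨qs, h1, h3⟩
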